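/- If the feasibility condition holds (spectral radius of F less than 1), the target-achieving backscattering vector is β* = (I_K − F)^{−1}u, where u_i = Γ_i ñ_i d_i^{3α}/|g_i|² and F_{ij} = Γ_i |g_j|² d_j^{−2α} d_i^{3α}/|g_i|² for j ≠ i (F_{ii} = 0); moreover β* has all nonnegative entries. -/

import Mathlib

open Real Matrix

lemma htb_mulVec {K : ℕ} (a b : Fin K → ℝ) (F : Matrix (Fin K) (Fin K) ℝ)
    (hF : ∀ i j, F i j = if i = j then 0 else a i * b j) (x : Fin K → ℝ) (i : Fin K) :
    (F *ᵥ x) i = a i * (∑ j, b j * x j) - a i * b i * x i := by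
  have h0 : (F *ᵥ x) i = ∑ j, F i j * x j := rfl
  rw [h0]
  have h1 : ∀ j, F i j * x j
      = a i * (b j * x j) - (if j = i then a i * (b j * x j) else 0) := by
    intro j
    rw [hF i j]
    by_cases h : i = j
    · subst h; simp
    · rw [if_neg h, if_neg (Ne.symm h)]; ring
  rw [Finset.sum_congr rfl (fun j _ => h1 j), Finset.sum_sub_distrib,
    Finset.sum_ite_eq' Finset.univ i (fun j => a i * (b j * x j)), ← Finset.mul_sum]
  simp
  ring

lemma htb_key {K : ℕ} (a b u : Fin K → ℝ) (ha : ∀ i, 0 ≤ a i) (hb : ∀ i, 0 < b i)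
    (hu : ∀ i, 0 ≤ u i) (F : Matrix (Fin K) (Fin K) ℝ)
    (hF : ∀ i j, F i j = if i = j then 0 else a i * b j)
    (hρ : spectralRadius ℝ F < 1) :
    IsUnit (1 - F) ∧ ∀ i, 0 ≤ ((1 - F)⁻¹ *ᵥ u) i := by
  classical
  have hm0 : ∀ j, 0 ≤ a j * b j := fun j => mul_nonneg (ha j) (hb j).le
  have hden : ∀ j, (0:ℝ) < 1 + a j * b j := fun j => by
    have := hm0 j; linarith
  -- Part 1 : IsUnit (1 - F)
  have h1mem : (1:ℝ) ∉ spectrum ℝ F := by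
    intro hmem
    have hle : (‖(1:ℝ)‖₊ : ENNReal) ≤ spectralRadius ℝ F :=
      le_iSup₂ (f := fun k (_ : k ∈ spectrum ℝ F) => (‖k‖₊ : ENNReal)) 1 hmem
    simp at hle
    exact absurd (lt_of_le_of_lt hle hρ) (lt_irrefl _)
  have h1 : IsUnit (1 - F) := by
    have := spectrum.notMem_iff.mp h1mem
    simpa using this
  refine ⟨h1, ?_⟩
  -- c < 1
  set c : ℝ := ∑ j, a j * b j / (1 + a j * b j) with hc_def
  have hc : c < 1 := by
    by_contra hc1
    push_neg at hc1
    -- find a real eigenvalue lam ≥ 1 by IVT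
    set g : ℝ → ℝ := fun t => ∑ j, a j * b j / (a j * b j + t) with hg_def
    set B : ℝ := 1 + ∑ j, a j * b j with hB_def
    have hsum0 : (0:ℝ) ≤ ∑ j, a j * b j := Finset.sum_nonneg fun j _ => hm0 j
    have hB1 : (1:ℝ) ≤ B := by simp [hB_def]; linarith
    have hBpos : (0:ℝ) < B := by linarith
    have hcont : ContinuousOn g (Set.Icc 1 B) := by
      apply continuousOn_finset_sum
      intro j _
      apply ContinuousOn.div continuousOn_const
      · exact (continuous_const.add continuous_id).continuousOn
      · intro t ht
        have : (1:ℝ) ≤ t := ht.1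
        have := hm0 j
        positivity
    have hg1 : g 1 = c := by
      simp only [hg_def, hc_def]
      exact Finset.sum_congr rfl fun j _ => by rw [add_comm]
    have hgB : g B < 1 := by
      have hstep : ∀ j : Fin K, a j * b j / (a j * b j + B) ≤ a j * b j / B := by
        intro j
        gcongr
        · exact hm0 j
        · linarith [hm0 j]
      have h2 : g B ≤ (∑ j, a j * b j) / B := by
        simp only [hg_def]
        rw [Finset.sum_div]
        exact Finset.sum_le_sum fun j _ => hstep j
      have h3 : (∑ j, a j * b j) / B < 1 := by
        rw [div_lt_one hBpos]
        simp only [hB_def]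
        linarith
      linarith
    have hmem1 : (1:ℝ) ∈ Set.Icc (g B) (g 1) := ⟨hgB.le, by rw [hg1]; exact hc1⟩
    obtain ⟨lam, hlam, hglam⟩ := intermediate_value_Icc' hB1 hcont hmem1
    have hlam1 : (1:ℝ) ≤ lam := hlam.1
    have hlampos : (0:ℝ) < lam := by linarith
    have hdpos : ∀ j, (0:ℝ) < a j * b j + lam := fun j => by have := hm0 j; linarith
    -- eigenvector
    set x : Fin K → ℝ := fun j => a j / (a j * b j + lam) with hx_def
    have hS : (∑ j, b j * x j) = 1 := by
      rw [← hglam]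
      simp only [hg_def, hx_def]
      refine Finset.sum_congr rfl fun j _ => ?_
      rw [mul_div_assoc']
      ring_nf
    have heig : F *ᵥ x = lam • x := by
      funext i
      rw [htb_mulVec a b F hF x i, hS]
      simp only [hx_def, Pi.smul_apply, smul_eq_mul, mul_one]
      rw [← mul_div_assoc, ← mul_div_assoc, sub_eq_iff_eq_add, ← add_div, eq_comm,
        div_eq_iff (hdpos i).ne']
      ring
    -- x ≠ 0
    have hjex : ∃ j, 0 < a j * b j := by
      by_contra hno
      push_neg at hno
      have : ∀ j, a j * b j = 0 := fun j => le_antisymm (hno j) (hm0 j)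
      have : c = 0 := by
        rw [hc_def]; exact Finset.sum_eq_zero fun j _ => by rw [this j]; simp
      linarith
    obtain ⟨j0, hj0⟩ := hjex
    have haj0 : 0 < a j0 := by
      rcases (mul_pos_iff.mp hj0) with ⟨h, _⟩ | ⟨h, _⟩
      · exact h
      · exact absurd h (not_lt.mpr (ha j0))
    have hxne : x ≠ 0 := by
      intro hx0
      have : x j0 = 0 := by rw [hx0]; rfl
      rw [hx_def] at this
      simp only at this
      have := div_eq_zero_iff.mp this
      rcases this with h | h
      · exact absurd h (ne_of_gt haj0)
      · exact absurd h (ne_of_gt (hdpos j0))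
    -- lam ∈ spectrum
    have hker : (algebraMap ℝ (Matrix (Fin K) (Fin K) ℝ) lam - F) *ᵥ x = 0 := by
      rw [Algebra.algebraMap_eq_smul_one, Matrix.sub_mulVec, Matrix.smul_mulVec,
        Matrix.one_mulVec, heig, sub_self]
    have hdet : (algebraMap ℝ (Matrix (Fin K) (Fin K) ℝ) lam - F).det = 0 :=
      Matrix.exists_mulVec_eq_zero_iff.mp ⟨x, hxne, hker⟩
    have hnotunit : ¬ IsUnit (algebraMap ℝ (Matrix (Fin K) (Fin K) ℝ) lam - F) := by
      rw [Matrix.isUnit_iff_isUnit_det, hdet]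
      exact not_isUnit_zero
    have hmemlam : lam ∈ spectrum ℝ F := spectrum.mem_iff.mpr hnotunit
    have hle : (‖lam‖₊ : ENNReal) ≤ spectralRadius ℝ F :=
      le_iSup₂ (f := fun k (_ : k ∈ spectrum ℝ F) => (‖k‖₊ : ENNReal)) lam hmemlam
    have h1le : (1 : ENNReal) ≤ (‖lam‖₊ : ENNReal) := by
      rw [show ((1:ENNReal)) = ((1:NNReal) : ENNReal) by simp, ENNReal.coe_le_coe,
        ← NNReal.coe_le_coe, coe_nnnorm, Real.norm_eq_abs]
      simpa using le_trans hlam1 (le_abs_self lam)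
    exact absurd (lt_of_le_of_lt (le_trans h1le hle) hρ) (lt_irrefl _)
  -- Part 2: explicit nonnegative solution
  set e : ℝ := ∑ j, b j * u j / (1 + a j * b j) with he_def
  have he0 : 0 ≤ e := Finset.sum_nonneg fun j _ =>
    div_nonneg (mul_nonneg (hb j).le (hu j)) (hden j).le
  set s : ℝ := e / (1 - c) with hs_def
  have hs0 : 0 ≤ s := div_nonneg he0 (by linarith)
  set x : Fin K → ℝ := fun i => (u i + s * a i) / (1 + a i * b i) with hx_def
  have hx0 : ∀ i, 0 ≤ x i := fun i =>
    div_nonneg (add_nonneg (hu i) (mul_nonneg hs0 (ha i))) (hden i).le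
  have hS : (∑ j, b j * x j) = e + s * c := by
    simp only [hx_def, hc_def, he_def]
    rw [Finset.mul_sum, ← Finset.sum_add_distrib]
    refine Finset.sum_congr rfl fun j _ => ?_
    field_simp
  have hsolve : (1 - F) *ᵥ x = u := by
    funext i
    rw [Matrix.sub_mulVec, Matrix.one_mulVec]
    have : ((1 - F : Matrix (Fin K) (Fin K) ℝ) *ᵥ x) i = x i - (F *ᵥ x) i := by
      rw [Matrix.sub_mulVec, Matrix.one_mulVec]; rfl
    show x i - (F *ᵥ x) i = u i
    rw [htb_mulVec a b F hF x i, hS]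
    have key : (1 + a i * b i) * x i = u i + s * a i := by
      simp only [hx_def]
      exact mul_div_cancel₀ _ (hden i).ne'
    have hse : s * (1 - c) = e := by
      simp only [hs_def]
      exact div_mul_cancel₀ _ (by linarith : (1:ℝ) - c ≠ 0)
    linear_combination key + a i * hse
  have hdetu : IsUnit (1 - F).det := (Matrix.isUnit_iff_isUnit_det _).mp h1
  have : (1 - F)⁻¹ *ᵥ u = x := by
    rw [← hsolve, Matrix.mulVec_mulVec, Matrix.nonsing_inv_mul _ hdetu, Matrix.one_mulVec]
  rw [this]
  exact hx0

/-- If the spectral radius of the nonnegative matrix `F` (with `F_ii = 0`,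
`F_ij = Γ_i |g_j|² d_j^(-2α) d_i^(3α)/|g_i|²` for `j ≠ i`) is less than 1, then
`I - F` is invertible, the target-achieving backscattering vector is
`β* = (I - F)⁻¹ u` with `u_i = Γ_i ñ_i d_i^(3α)/|g_i|²`, and `β*` is entrywise
nonnegative. -/
theorem HTB_closed_form (K : ℕ) (hK : 0 < K) (Γ ntil d g2 : Fin K → ℝ) (α : ℝ)
    (hΓ : ∀ i, 0 ≤ Γ i) (hn : ∀ i, 0 < ntil i) (hd : ∀ i, 0 < d i)
    (hg : ∀ i, 0 < g2 i) (hα : 0 < α)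
    (F : Matrix (Fin K) (Fin K) ℝ)
    (hF : ∀ i j, F i j = if i = j then 0
      else Γ i * g2 j * (d j) ^ (-(2 * α)) * (d i) ^ (3 * α) / g2 i)
    (u : Fin K → ℝ) (hu : ∀ i, u i = Γ i * ntil i * (d i) ^ (3 * α) / g2 i)
    (hρ : spectralRadius ℝ F < 1) :
    IsUnit (1 - F) ∧ ∀ i, 0 ≤ ((1 - F)⁻¹ *ᵥ u) i := by
  have hd3 : ∀ i, (0:ℝ) < (d i) ^ (3 * α) := fun i => Real.rpow_pos_of_pos (hd i) _
  have hd2 : ∀ i, (0:ℝ) < (d i) ^ (-(2 * α)) := fun i => Real.rpow_pos_of_pos (hd i) _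
  refine htb_key (fun i => Γ i * (d i) ^ (3 * α) / g2 i)
    (fun j => g2 j * (d j) ^ (-(2 * α))) u ?_ ?_ ?_ F ?_ hρ
  · intro i
    exact div_nonneg (mul_nonneg (hΓ i) (hd3 i).le) (hg i).le
  · intro j
    exact mul_pos (hg j) (hd2 j)
  · intro i
    rw [hu i]
    exact div_nonneg (mul_nonneg (mul_nonneg (hΓ i) (hn i).le) (hd3 i).le) (hg i).le
  · intro i j
    rw [hF i j]
    by_cases h : i = j
    · simp [h]
    · rw [if_neg h, if_neg h]
      ring
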